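/- Let S be a finite defective set in [n], let 0 ≤ ℓ < u with g = u − ℓ − 1 > 0, and let F be a family of u-subsets of [n] such that (i) every X ∈ F satisfies |X ∩ S| ≥ ℓ + 1, and (ii) every u-subset of S belongs to F. If S' ⊆ [n] is a union of u-subsets built by first greedily adding pairwise disjoint members of F until no member of F is disjoint from the current union, and then adding members A of F with |S' ∪ A| ≥ |S'| + g + 1 until none exists, then the final S' satisfies |S \ S'| ≤ g and |S' \ S| ≤ (⌊|S|/(ℓ+1)⌋ + u − 1) · g. -/

import Mathlib

/-- The union of a list of finite sets. -/
def listUnion {α : Type*} [DecidableEq α] (L : List (Finset α)) : Finset α :=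
  L.foldr (· ∪ ·) ∅

section Aux

variable {α : Type*} [DecidableEq α]

lemma listUnion_nil : listUnion ([] : List (Finset α)) = ∅ := rfl

lemma listUnion_cons (B : Finset α) (L : List (Finset α)) :
    listUnion (B :: L) = B ∪ listUnion L := rfl

lemma listUnion_append (L M : List (Finset α)) :
    listUnion (L ++ M) = listUnion L ∪ listUnion M := by
  induction L with
  | nil => simp [listUnion_nil]
  | cons B L ih => simp [listUnion_cons, ih, Finset.union_assoc]

lemma mem_listUnion {L : List (Finset α)} {a : α} :
    a ∈ listUnion L ↔ ∃ A ∈ L, a ∈ A := by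
  induction L with
  | nil => simp [listUnion_nil]
  | cons B L ih => simp [listUnion_cons, ih]

lemma subset_listUnion {L : List (Finset α)} {A : Finset α} (h : A ∈ L) :
    A ⊆ listUnion L := fun a ha => mem_listUnion.mpr ⟨A, h, ha⟩

lemma listUnion_sdiff_card_le (L : List (Finset α)) (S : Finset α) :
    (listUnion L \ S).card ≤ (L.map fun A => (A \ S).card).sum := by
  induction L with
  | nil => simp [listUnion_nil]
  | cons B L ih =>
    simp only [listUnion_cons, List.map_cons, List.sum_cons]
    calc ((B ∪ listUnion L) \ S).card
        = ((B \ S) ∪ (listUnion L \ S)).card := by rw [Finset.union_sdiff_distrib]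
      _ ≤ (B \ S).card + (listUnion L \ S).card := Finset.card_union_le _ _
      _ ≤ (B \ S).card + (L.map fun A => (A \ S).card).sum := by omega

lemma card_listUnion_of_pairwise {L : List (Finset α)} (h : L.Pairwise Disjoint) :
    (listUnion L).card = (L.map Finset.card).sum := by
  induction L with
  | nil => simp [listUnion_nil]
  | cons B L ih =>
    rw [List.pairwise_cons] at h
    have hd : Disjoint B (listUnion L) := by
      rw [Finset.disjoint_left]
      intro a ha hmem
      obtain ⟨A, hA, haA⟩ := mem_listUnion.mp hmem
      exact (h.1 A hA).forall_ne_finset ha haA rfl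
    simp only [listUnion_cons, List.map_cons, List.sum_cons,
      Finset.card_union_of_disjoint hd, ih h.2]

/-- Each set picked in phase 2 contributes at least one new element of `S`. -/
lemma phase2_count {S : Finset α} {g : ℕ} :
    ∀ (L2 L1 : List (Finset α)),
    (∀ pre A post, L2 = pre ++ A :: post →
      (listUnion (L1 ++ pre)).card + g + 1 ≤ (listUnion (L1 ++ pre) ∪ A).card) →
    (∀ A ∈ L2, (A \ S).card ≤ g) →
    (listUnion L1 ∩ S).card + L2.length ≤ (listUnion (L1 ++ L2) ∩ S).card := by
  intro L2
  induction L2 with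
  | nil => intro L1 _ _; simp
  | cons A L2 ih =>
    intro L1 hP hle
    set W := listUnion L1 with hW
    have h1 : W.card + g + 1 ≤ (W ∪ A).card := by
      have := hP [] A L2 rfl
      simpa using this
    -- A adds at least g+1 elements, at most g of them outside S
    have hcardWA : (W ∪ A).card = W.card + (A \ W).card := by
      rw [Finset.union_comm W A, ← Finset.card_sdiff_add_card A W, Nat.add_comm]
    have hAW : g + 1 ≤ (A \ W).card := by omega
    have hsub : A \ W ⊆ (A \ S) ∪ ((A ∩ S) \ W) := by
      intro a ha
      simp only [Finset.mem_sdiff, Finset.mem_union, Finset.mem_inter] at ha ⊢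
      by_cases haS : a ∈ S
      · exact Or.inr ⟨⟨ha.1, haS⟩, ha.2⟩
      · exact Or.inl ⟨ha.1, haS⟩
    have h2 : 1 ≤ ((A ∩ S) \ W).card := by
      have := (Finset.card_le_card hsub).trans (Finset.card_union_le _ _)
      have := hle A (List.mem_cons_self (a := A) (l := L2))
      omega
    have h3 : (W ∩ S).card + 1 ≤ ((W ∪ A) ∩ S).card := by
      have hsub2 : (W ∩ S) ∪ ((A ∩ S) \ W) ⊆ (W ∪ A) ∩ S := by
        intro a ha
        simp only [Finset.mem_union, Finset.mem_inter, Finset.mem_sdiff] at ha ⊢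
        rcases ha with ⟨h, h'⟩ | ⟨⟨h, h'⟩, _⟩
        · exact ⟨Or.inl h, h'⟩
        · exact ⟨Or.inr h, h'⟩
      have hdisj : Disjoint (W ∩ S) ((A ∩ S) \ W) := by
        rw [Finset.disjoint_left]
        intro a ha hb
        simp only [Finset.mem_inter, Finset.mem_sdiff] at ha hb
        exact hb.2 ha.1
      calc (W ∩ S).card + 1 ≤ (W ∩ S).card + ((A ∩ S) \ W).card := by omega
        _ = ((W ∩ S) ∪ ((A ∩ S) \ W)).card := (Finset.card_union_of_disjoint hdisj).symm
        _ ≤ ((W ∪ A) ∩ S).card := Finset.card_le_card hsub2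
    have ih' := ih (L1 ++ [A]) ?_ (fun B hB => hle B (List.mem_cons_of_mem _ hB))
    · have e1 : listUnion (L1 ++ [A]) = W ∪ A := by
        rw [listUnion_append]; simp [listUnion_cons, listUnion_nil, hW]
      have e2 : listUnion ((L1 ++ [A]) ++ L2) = listUnion (L1 ++ (A :: L2)) := by
        rw [List.append_assoc]; rfl
      rw [e1, e2] at ih'
      simp only [List.length_cons]
      omega
    · intro pre B post hsplit
      have := hP (A :: pre) B post (by rw [hsplit]; rfl)
      have e : L1 ++ A :: pre = (L1 ++ [A]) ++ pre := by
        rw [List.append_assoc]; rfl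
      rwa [e] at this

end Aux

/-- Correctness of the two-phase greedy algorithm (Algorithm 2). The sets picked in the
first phase form a list `L1` of pairwise disjoint members of `F`, and the phase stops
when no unused member of `F` is disjoint from the current union; the sets picked in the
second phase form a list `L2` of members of `F`, each adding at least `g + 1` new
elements, and the phase stops when no unused member of `F` adds `g + 1` new elements.
The final set `S' = ⋃ (L1 ++ L2)` satisfies `|S \ S'| ≤ g` and
`|S' \ S| ≤ (⌊|S|/(ℓ+1)⌋ + u - 1)·g`. -/
theorem greedy_two_phase_correct (n u ℓ g : ℕ) (S : Finset (Fin n))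
    (F : Finset (Finset (Fin n)))
    (hg : 0 < g) (hu : u = ℓ + g + 1) (hSu : u ≤ S.card)
    (hcard : ∀ X ∈ F, X.card = u)
    (hint : ∀ X ∈ F, ℓ + 1 ≤ (X ∩ S).card)
    (hall : ∀ X : Finset (Fin n), X ⊆ S → X.card = u → X ∈ F)
    (L1 L2 : List (Finset (Fin n)))
    (hmem : ∀ A ∈ L1 ++ L2, A ∈ F)
    (hnodup : (L1 ++ L2).Nodup)
    (hL1ne : L1 ≠ [])
    (hdisj : L1.Pairwise (fun A B => Disjoint A B))
    (hstop1 : ∀ A ∈ F, A ∉ L1 → ¬ Disjoint A (listUnion L1))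
    (hphase2 : ∀ (pre : List (Finset (Fin n))) (A : Finset (Fin n))
        (post : List (Finset (Fin n))), L2 = pre ++ A :: post →
      (listUnion (L1 ++ pre)).card + g + 1 ≤ (listUnion (L1 ++ pre) ∪ A).card)
    (hstop2 : ∀ A ∈ F, A ∉ L1 ++ L2 →
      (listUnion (L1 ++ L2) ∪ A).card < (listUnion (L1 ++ L2)).card + g + 1) :
    (S \ listUnion (L1 ++ L2)).card ≤ g ∧
    (listUnion (L1 ++ L2) \ S).card ≤ (S.card / (ℓ + 1) + u - 1) * g := by
  set U := listUnion (L1 ++ L2) with hU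
  set U1 := listUnion L1 with hU1
  -- every member of F misses S in at most g points
  have hmiss : ∀ A ∈ F, (A \ S).card ≤ g := by
    intro A hA
    have h1 := hcard A hA
    have h2 := hint A hA
    have h3 := Finset.card_sdiff_add_card_inter A S
    omega
  -- Claim 1 : |S \ U| ≤ g
  have claim1 : (S \ U).card ≤ g := by
    by_contra hcon
    push_neg at hcon
    -- pick B ⊆ S \ U of size min u |S\U|, extend to A ⊆ S of size u
    obtain ⟨B, hBsub, hBcard⟩ :=
      Finset.exists_subset_card_eq (min_le_right u (S \ U).card)
    have hBS : B ⊆ S := hBsub.trans (Finset.sdiff_subset)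
    obtain ⟨A, hBA, hAS, hAcard⟩ :=
      Finset.exists_subsuperset_card_eq hBS (by omega : B.card ≤ u) hSu
    have hAF : A ∈ F := hall A hAS hAcard
    have hBcard' : g + 1 ≤ B.card := by
      rw [hBcard]
      rcases le_total u (S \ U).card with h | h
      · omega
      · omega
    have hBne : B.Nonempty := Finset.card_pos.mp (by omega)
    have hAnot : A ∉ L1 ++ L2 := by
      intro hAin
      obtain ⟨b, hb⟩ := hBne
      have hbU : b ∈ U := (subset_listUnion hAin) (hBA hb)
      have := hBsub hb
      simp only [Finset.mem_sdiff] at this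
      exact this.2 hbU
    have hst := hstop2 A hAF hAnot
    -- but A adds at least |B| ≥ g+1 new elements
    have hBAU : B ⊆ A \ U := by
      intro b hb
      simp only [Finset.mem_sdiff]
      have := hBsub hb
      simp only [Finset.mem_sdiff] at this
      exact ⟨hBA hb, this.2⟩
    have hcardUA : (U ∪ A).card = U.card + (A \ U).card := by
      rw [Finset.union_comm U A, ← Finset.card_sdiff_add_card A U, Nat.add_comm]
    have := Finset.card_le_card hBAU
    omega
  refine ⟨claim1, ?_⟩
  -- Claim: |S \ U1| ≤ u - 1
  have claimU1 : (S \ U1).card + 1 ≤ u := by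
    by_contra hcon
    push_neg at hcon
    obtain ⟨A, hAsub, hAcard⟩ := Finset.exists_subset_card_eq (by omega : u ≤ (S \ U1).card)
    have hAF : A ∈ F := hall A (hAsub.trans Finset.sdiff_subset) hAcard
    have hAd : Disjoint A U1 := by
      rw [Finset.disjoint_left]
      intro a ha hb
      have := hAsub ha
      simp only [Finset.mem_sdiff] at this
      exact this.2 hb
    have hAnot : A ∉ L1 := by
      intro hAin
      have hAne : A.Nonempty := Finset.card_pos.mp (by omega)
      obtain ⟨a, ha⟩ := hAne
      exact (Finset.disjoint_left.mp hAd ha) (subset_listUnion hAin ha)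
    exact hstop1 A hAF hAnot hAd
  -- |L1| ≤ |S| / (ℓ+1)
  have hL1len : L1.length ≤ S.card / (ℓ + 1) := by
    rw [Nat.le_div_iff_mul_le (by omega : 0 < ℓ + 1)]
    have hpair : (L1.map (· ∩ S)).Pairwise Disjoint := by
      refine List.Pairwise.map _ ?_ hdisj
      intro A B hAB
      exact hAB.mono Finset.inter_subset_left Finset.inter_subset_left
    have hcardsum := card_listUnion_of_pairwise hpair
    have hsubS : listUnion (L1.map (· ∩ S)) ⊆ S := by
      intro a ha
      obtain ⟨A, hA, haA⟩ := mem_listUnion.mp ha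
      obtain ⟨B, hB, rfl⟩ := List.mem_map.mp hA
      exact (Finset.inter_subset_right) haA
    have hsum : L1.length * (ℓ + 1) ≤ ((L1.map (· ∩ S)).map Finset.card).sum := by
      rw [List.map_map]
      have : ∀ A ∈ L1, ℓ + 1 ≤ (Finset.card ∘ (· ∩ S)) A := by
        intro A hA
        exact hint A (hmem A (List.mem_append_left _ hA))
      calc L1.length * (ℓ + 1) = (L1.map fun _ => ℓ + 1).sum := by
            simp [List.map_const', List.sum_replicate, smul_eq_mul, mul_comm]
      _ ≤ (L1.map (Finset.card ∘ (· ∩ S))).sum := by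
            apply List.sum_le_sum
            intro A hA
            exact this A hA
    calc L1.length * (ℓ + 1) ≤ ((L1.map (· ∩ S)).map Finset.card).sum := hsum
      _ = (listUnion (L1.map (· ∩ S))).card := hcardsum.symm
      _ ≤ S.card := Finset.card_le_card hsubS
  -- |L2| ≤ |S \ U1|
  have hL2len : L2.length ≤ (S \ U1).card := by
    have hle : ∀ A ∈ L2, (A \ S).card ≤ g := fun A hA =>
      hmiss A (hmem A (List.mem_append_right _ hA))
    have hcount := phase2_count L2 L1 hphase2 hle
    have h1 : (U ∩ S).card ≤ S.card := Finset.card_le_card Finset.inter_subset_right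
    have h2 := Finset.card_sdiff_add_card_inter S U1
    have h3 : (U1 ∩ S).card = (S ∩ U1).card := by rw [Finset.inter_comm]
    rw [← hU1, ← hU] at hcount
    omega
  -- conclude claim 2
  have hsumle : (U \ S).card ≤ ((L1 ++ L2).map fun A => (A \ S).card).sum :=
    listUnion_sdiff_card_le _ _
  have hsumg : ((L1 ++ L2).map fun A => (A \ S).card).sum ≤ (L1.length + L2.length) * g := by
    have : ∀ A ∈ L1 ++ L2, (A \ S).card ≤ g := fun A hA => hmiss A (hmem A hA)
    calc ((L1 ++ L2).map fun A => (A \ S).card).sum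
        ≤ ((L1 ++ L2).map fun _ => g).sum := by
          apply List.sum_le_sum
          intro A hA
          exact this A hA
      _ = (L1.length + L2.length) * g := by
          simp [List.map_const', List.sum_replicate, smul_eq_mul, mul_comm]
  have hlen : L1.length + L2.length ≤ S.card / (ℓ + 1) + u - 1 := by omega
  calc (U \ S).card ≤ (L1.length + L2.length) * g := le_trans hsumle hsumg
    _ ≤ (S.card / (ℓ + 1) + u - 1) * g := Nat.mul_le_mul_right g hlen
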